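/- Let M be a DFA and let A → BC be a rule of an SLP. For states i, j and distinct states k ≠ k', the sets D_k = {Λ_B ∪ (Λ_C + |deriv(B)|) : Λ_B ∈ T_B[i, k], Λ_C ∈ T_C[k, j]} and D_{k'} = {Λ_B ∪ (Λ_C + |deriv(B)|) : Λ_B ∈ T_B[i, k'], Λ_C ∈ T_C[k', j]} are disjoint. -/

import Mathlib

/-- A non-tail-spanning marked word `A₁ b₁ A₂ b₂ … Aₙ bₙ` (the trailing set symbol
`A_{n+1}` is empty and omitted). -/
abbrev MWord (Γ Alph : Type*) := List (Finset Γ × Alph)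

/-- The `s`-rightshift of a partial marker set. -/
def rshift {Γ : Type*} [DecidableEq Γ] (Λ : Finset (Γ × ℕ)) (s : ℕ) : Finset (Γ × ℕ) :=
  Λ.image (fun p => (p.1, p.2 + s))

/-- Insert the markers of `Λ` into the document `d` (positions `> |d|` are not placed;
for non-tail-spanning `Λ` no marker is lost). -/
def ins {Γ Alph : Type*} [DecidableEq Γ] (d : List Alph) (Λ : Finset (Γ × ℕ)) :
    MWord Γ Alph :=
  (d.zipIdx.map Prod.swap).map (fun ib => ((Λ.filter (fun p => p.2 = ib.1 + 1)).image Prod.fst, ib.2))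

/-- Erase all set symbols. -/
def getWord {Γ Alph : Type*} (w : MWord Γ Alph) : List Alph := w.map Prod.snd

/-- The partial marker set `{(σ, i) : σ ∈ Aᵢ}` encoded by a marked word. -/
def mkd {Γ Alph : Type*} [DecidableEq Γ] (w : MWord Γ Alph) : Finset (Γ × ℕ) :=
  ((w.zipIdx.map Prod.swap).map (fun ib => ib.2.1.image (fun σ => (σ, ib.1 + 1)))).foldr (· ∪ ·) ∅

/-- Serialize a marked word into the sequence of symbols (over `𝒫(Γ_𝒳) ∪ Σ`) read
by an automaton: `A₁, b₁, A₂, b₂, …, Aₙ, bₙ`. -/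
def ser {Γ Alph : Type*} (w : MWord Γ Alph) : List (Finset Γ ⊕ Alph) :=
  w.flatMap (fun Ab => [Sum.inl Ab.1, Sum.inr Ab.2])

/-- `T_A[i, j]` for a DFA. -/
def TsetD {Γ Alph Q : Type*} [DecidableEq Γ] (δ : Q → (Finset Γ ⊕ Alph) → Q)
    (w : List Alph) (i j : Q) : Set (Finset (Γ × ℕ)) :=
  {Λ | (∀ p ∈ Λ, 1 ≤ p.2 ∧ p.2 ≤ w.length + 1) ∧ (∀ p ∈ Λ, p.2 ≠ w.length + 1) ∧
    (ser (ins w Λ)).foldl δ i = j}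

/-- `D_k = {Λ_B ∪ (Λ_C + |deriv(B)|) : Λ_B ∈ T_B[i, k], Λ_C ∈ T_C[k, j]}` for a
rule `A → BC` with `wB = deriv(B)`, `wC = deriv(C)`. -/
def Dset {Γ Alph Q : Type*} [DecidableEq Γ] (δ : Q → (Finset Γ ⊕ Alph) → Q)
    (wB wC : List Alph) (i k j : Q) : Set (Finset (Γ × ℕ)) :=
  {Λ | ∃ ΛB ∈ TsetD δ wB i k, ∃ ΛC ∈ TsetD δ wC k j, Λ = ΛB ∪ rshift ΛC wB.length}

/-- For a DFA and a rule `A → BC`, the sets `D_k` and `D_{k'}` are disjoint for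
distinct intermediate states `k ≠ k'`. -/
theorem Dset_disjoint {Γ Alph Q : Type*} [DecidableEq Γ]
    (δ : Q → (Finset Γ ⊕ Alph) → Q) (wB wC : List Alph) (i j k k' : Q) (h : k ≠ k') :
    Disjoint (Dset δ wB wC i k j) (Dset δ wB wC i k' j) := by
  rw [Set.disjoint_left]
  rintro Λ ⟨ΛB, hB, ΛC, hC, rfl⟩ ⟨ΛB', hB', ΛC', hC', heq⟩
  -- positions in ΛB, ΛB' are ≤ wB.length
  have small : ∀ (ΛD : Finset (Γ × ℕ)) (k₀ : Q), ΛD ∈ TsetD δ wB i k₀ →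
      ∀ p ∈ ΛD, p.2 ≤ wB.length := by
    rintro ΛD k₀ ⟨h1, h2, _⟩ p hp
    exact Nat.lt_succ_iff.mp (lt_of_le_of_ne (h1 p hp).2 (h2 p hp))
  -- positions in shifted sets are > wB.length
  have big : ∀ (ΛD : Finset (Γ × ℕ)) (k₀ : Q), ΛD ∈ TsetD δ wC k₀ j →
      ∀ p ∈ rshift ΛD wB.length, wB.length < p.2 := by
    rintro ΛD k₀ ⟨h1, _, _⟩ p hp
    rw [rshift, Finset.mem_image] at hp
    obtain ⟨q, hq, rfl⟩ := hp
    have := (h1 q hq).1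
    simp only
    omega
  have key : ΛB = ΛB' := by
    ext p
    constructor <;> intro hp
    · have hp' : p ∈ ΛB' ∪ rshift ΛC' wB.length := heq ▸ Finset.mem_union_left _ hp
      rcases Finset.mem_union.mp hp' with h' | h'
      · exact h'
      · exact absurd (big ΛC' k' hC' p h') (not_lt.mpr (small ΛB k hB p hp))
    · have hp' : p ∈ ΛB ∪ rshift ΛC wB.length := heq ▸ Finset.mem_union_left _ hp
      rcases Finset.mem_union.mp hp' with h' | h'
      · exact h'
      · exact absurd (big ΛC k hC p h') (not_lt.mpr (small ΛB' k' hB' p hp))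
  exact h (hB.2.2 ▸ key ▸ hB'.2.2)
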